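/- For 0 < ν < 1, p ∈ (0, π/2), and the two-particle dispersion ω₊₊(p,k) = ω(p+k) + ω(p−k) with ω(x) = arccos(ν cos x), every real k with ∂ω₊₊/∂k (p,k) = 0 satisfies k ≡ 0 (mod π). -/

import Mathlib

open Real

theorem stationary_points (ν : ℝ) (hν0 : 0 < ν) (hν1 : ν < 1) (p : ℝ)
    (hp0 : 0 < p) (hp1 : p < Real.pi / 2) (k : ℝ)
    (hstat : deriv (fun k : ℝ =>
      Real.arccos (ν * Real.cos (p + k)) + Real.arccos (ν * Real.cos (p - k))) k = 0) :
    ∃ n : ℤ, k = n * Real.pi := by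
  -- basic bounds
  have habs : ∀ x : ℝ, |ν * Real.cos x| < 1 := by
    intro x
    calc |ν * Real.cos x| = ν * |Real.cos x| := by
          rw [abs_mul, abs_of_pos hν0]
      _ ≤ ν * 1 := by nlinarith [abs_cos_le_one x, abs_nonneg (Real.cos x)]
      _ < 1 := by linarith
  have hsqpos : ∀ x : ℝ, 0 < 1 - (ν * Real.cos x) ^ 2 := by
    intro x
    have := habs x
    nlinarith [abs_nonneg (ν * Real.cos x), sq_abs (ν * Real.cos x)]
  have hsqrtpos : ∀ x : ℝ, 0 < Real.sqrt (1 - (ν * Real.cos x) ^ 2) := fun x =>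
    Real.sqrt_pos.2 (hsqpos x)
  -- derivative of x ↦ arccos (ν cos x)
  have hD : ∀ x : ℝ, HasDerivAt (fun y => Real.arccos (ν * Real.cos y))
      (ν * Real.sin x / Real.sqrt (1 - (ν * Real.cos x) ^ 2)) x := by
    intro x
    have h1 : ν * Real.cos x ≠ -1 := by
      intro h; have := habs x; rw [h] at this; simp at this
    have h2 : ν * Real.cos x ≠ 1 := by
      intro h; have := habs x; rw [h] at this; simp at this
    have hinner : HasDerivAt (fun y => ν * Real.cos y) (ν * (-Real.sin x)) x :=
      (Real.hasDerivAt_cos x).const_mul ν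
    have := (Real.hasDerivAt_arccos h1 h2).comp x hinner
    refine this.congr_deriv ?_
    have := (hsqrtpos x).ne'
    ring
  -- derivative of the whole function
  have hplus : HasDerivAt (fun y : ℝ => Real.arccos (ν * Real.cos (p + y)))
      (ν * Real.sin (p + k) / Real.sqrt (1 - (ν * Real.cos (p + k)) ^ 2)) k := by
    have hi : HasDerivAt (fun y : ℝ => p + y) 1 k := (hasDerivAt_id k).const_add p
    have := (hD (p + k)).comp k hi
    simpa [Function.comp_def] using this
  have hminus : HasDerivAt (fun y : ℝ => Real.arccos (ν * Real.cos (p - y)))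
      (-(ν * Real.sin (p - k) / Real.sqrt (1 - (ν * Real.cos (p - k)) ^ 2))) k := by
    have hi : HasDerivAt (fun y : ℝ => p - y) (-1) k := (hasDerivAt_id k).const_sub p
    have := (hD (p - k)).comp k hi
    refine this.congr_deriv ?_
    ring
  have hsum := hplus.add hminus
  have hderiv := hsum.deriv
  simp only [Pi.add_def] at hderiv
  rw [hstat] at hderiv
  -- notation
  set sa := Real.sin (p + k) with hsa
  set sb := Real.sin (p - k) with hsb
  set A := Real.sqrt (1 - (ν * Real.cos (p + k)) ^ 2) with hA
  set B := Real.sqrt (1 - (ν * Real.cos (p - k)) ^ 2) with hB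
  have hApos : 0 < A := hsqrtpos _
  have hBpos : 0 < B := hsqrtpos _
  have heq : sa * B = sb * A := by
    have h : ν * sa / A = ν * sb / B := by linarith [hderiv]
    rw [div_eq_div_iff hApos.ne' hBpos.ne'] at h
    exact mul_left_cancel₀ hν0.ne' (by linear_combination h)
  have hA2 : A ^ 2 = 1 - ν ^ 2 + ν ^ 2 * sa ^ 2 := by
    rw [hA, sq_sqrt (le_of_lt (hsqpos _))]
    have := Real.sin_sq_add_cos_sq (p + k)
    nlinarith [this]
  have hB2 : B ^ 2 = 1 - ν ^ 2 + ν ^ 2 * sb ^ 2 := by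
    rw [hB, sq_sqrt (le_of_lt (hsqpos _))]
    have := Real.sin_sq_add_cos_sq (p - k)
    nlinarith [this]
  -- squares equal
  have hsq : sa ^ 2 = sb ^ 2 := by
    have h2 : sa ^ 2 * B ^ 2 = sb ^ 2 * A ^ 2 := by
      have := congrArg (fun t : ℝ => t ^ 2) heq
      simpa [mul_pow] using this
    rw [hA2, hB2] at h2
    have h3 : (1 - ν ^ 2) * (sa ^ 2 - sb ^ 2) = 0 := by linear_combination h2
    have h4 : (1 - ν ^ 2) ≠ 0 := by nlinarith
    have := (mul_eq_zero.1 h3).resolve_left h4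
    linarith
  have hAB : A = B := by
    rw [hA, hB]
    congr 1
    have e1 := Real.sin_sq_add_cos_sq (p + k)
    have e2 := Real.sin_sq_add_cos_sq (p - k)
    rw [hsa, hsb] at hsq
    nlinarith [hsq, e1, e2]
  have hsab : sa = sb := by
    rw [hAB] at heq
    exact mul_right_cancel₀ hBpos.ne' heq
  -- conclude sin k = 0
  have hsk : Real.sin k = 0 := by
    have hexp : sa - sb = 2 * Real.cos p * Real.sin k := by
      rw [hsa, hsb, Real.sin_add, Real.sin_sub]; ring
    have hcos : 0 < Real.cos p := Real.cos_pos_of_mem_Ioo ⟨by linarith [Real.pi_pos], hp1⟩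
    have : 2 * Real.cos p * Real.sin k = 0 := by rw [← hexp, hsab]; ring
    have h2 : Real.cos p ≠ 0 := hcos.ne'
    rcases mul_eq_zero.1 this with h | h
    · rcases mul_eq_zero.1 h with h | h
      · norm_num at h
      · exact absurd h h2
    · exact h
  obtain ⟨n, hn⟩ := Real.sin_eq_zero_iff.1 hsk
  exact ⟨n, hn.symm⟩
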